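/- Let α be a type of atoms, let G be a ground program over α, let E ⊆ G be an embedding program for G, and let A be an answer set of E. Then the FLP reducts of G and of E with respect to A coincide: G^A = E^A. -/
import Mathlib


structure GroundRule (α : Type*) where
  head : Set α
  posBody : Set α
  negBody : Set α

namespace GroundRule

variable {α : Type*}

/-- `Heads R` is the set of all head atoms of rules in `R`. -/
def Heads (R : Set (GroundRule α)) : Set α := ⋃ r ∈ R, r.head

/-- `R` body-embeds `r` (written `R ⊢_b r`). -/
def BodyEmbeds (R : Set (GroundRule α)) (r : GroundRule α) : Prop :=
  ∀ a ∈ r.posBody, ∃ r' ∈ R, a ∈ r'.head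

/-- `R` embeds `r` (written `R ⊢ r`): either `R` does not body-embed `r`,
or `R` head-embeds `r` (i.e. `r ∈ R`). -/
def Embeds (R : Set (GroundRule α)) (r : GroundRule α) : Prop :=
  ¬ BodyEmbeds R r ∨ r ∈ R

/-- `E` is an embedding program for the ground program `G`. -/
def IsEmbeddingProgram (G E : Set (GroundRule α)) : Prop :=
  E ⊆ G ∧ ∀ r ∈ G, Embeds E r

/-- The fact rule `a.` for an atom `a`. -/
def factRule (a : α) : GroundRule α := ⟨{a}, ∅, ∅⟩

/-- `factRules F` is the set of fact rules `{a. : a ∈ F}`. -/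
def factRules (F : Set α) : Set (GroundRule α) := factRule '' F

/-- The instantiation operator `Inst(P, S) = {r ∈ P : B⁺(r) ⊆ S}`. -/
def Inst (P : Set (GroundRule α)) (S : Set α) : Set (GroundRule α) :=
  {r ∈ P | r.posBody ⊆ S}

/-- Interpretation `I` satisfies the body of `r`. -/
def SatBody (I : Set α) (r : GroundRule α) : Prop :=
  r.posBody ⊆ I ∧ r.negBody ∩ I = ∅

/-- Interpretation `I` satisfies the rule `r`. -/
def SatRule (I : Set α) (r : GroundRule α) : Prop :=
  ¬ SatBody I r ∨ (r.head ∩ I).Nonempty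

/-- `I` is a model of the ground program `G`. -/
def IsModel (I : Set α) (G : Set (GroundRule α)) : Prop :=
  ∀ r ∈ G, SatRule I r

/-- FLP reduct `G^I = {r ∈ G : I ⊨ B(r)}`. -/
def reduct (G : Set (GroundRule α)) (I : Set α) : Set (GroundRule α) :=
  {r ∈ G | SatBody I r}

/-- `A` is an answer set of `G`: `A` is a model of `G^A` minimal w.r.t. `⊆`. -/
def IsAnswerSet (G : Set (GroundRule α)) (A : Set α) : Prop :=
  IsModel A (reduct G A) ∧ ∀ B, B ⊂ A → ¬ IsModel B (reduct G A)

/-- `AS G` is the set of all answer sets of `G`. -/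
def AS (G : Set (GroundRule α)) : Set (Set α) := {A | IsAnswerSet G A}

theorem Heads_mono {R R' : Set (GroundRule α)} (h : R ⊆ R') : Heads R ⊆ Heads R' := by
  intro a ha
  simp only [Heads, Set.mem_iUnion, exists_prop] at ha ⊢
  obtain ⟨r, hr, har⟩ := ha
  exact ⟨r, h hr, har⟩

/-- The monotone operator `R ↦ Inst(P, Heads(R) ∪ F)`. -/
def InstOp (P : Set (GroundRule α)) (F : Set α) :
    Set (GroundRule α) →o Set (GroundRule α) where
  toFun R := Inst P (Heads R ∪ F)
  monotone' := fun _ _ h _ hr =>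
    ⟨hr.1, hr.2.trans (Set.union_subset_union_left F (Heads_mono h))⟩

/-- `Inst^∞(P, F)`: the least fixpoint of `R ↦ Inst(P, Heads(R) ∪ F)`. -/
def InstInf (P : Set (GroundRule α)) (F : Set α) : Set (GroundRule α) :=
  OrderHom.lfp (InstOp P F)

end GroundRule

open GroundRule

/-- if `E` is an embedding program for `G` and `A` an answer set
of `E`, then `G^A = E^A`. -/
theorem reduct_eq_of_answerSet_of_embedding {α : Type*} (G E : Set (GroundRule α))
    (hE : IsEmbeddingProgram G E)
    (A : Set α) (hA : IsAnswerSet E A) :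
    reduct G A = reduct E A := by
  apply Set.Subset.antisymm
  · intro r hr
    obtain ⟨hrG, hrB⟩ := hr
    rcases hE.2 r hrG with hnb | hrE
    · exfalso
      apply hnb
      intro a ha
      have haA : a ∈ A := hrB.1 ha
      by_contra hno
      push_neg at hno
      -- A \ {a} is a model of reduct E A, contradicting minimality
      apply hA.2 (A \ {a})
      · constructor
        · exact Set.diff_subset
        · intro h
          exact (h haA).2 rfl
      · intro r' hr'
        rcases hA.1 r' hr' with hns | ⟨x, hx⟩
        · exact absurd hr'.2 hns
        · right
          refine ⟨x, hx.1, hx.2, ?_⟩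
          rintro rfl
          exact hno r' hr'.1 hx.1
      
    · exact ⟨hrE, hrB⟩
  · exact fun r hr => ⟨hE.1 hr.1, hr.2⟩
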